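/- There exists a proper subfield K of ℂ (K ≠ ℂ) such that K, with its inherited field operations, is isomorphic to ℂ as a field. -/

import Mathlib

open Cardinal

/-- There exists a proper subfield of `ℂ` which is isomorphic, as a field, to `ℂ` itself. -/
theorem exists_proper_subfield_isomorphic_to_complex :
    ∃ K : Subfield ℂ, K ≠ ⊤ ∧ Nonempty (↥K ≃+* ℂ) := by
  classical
  obtain ⟨s, hs⟩ := exists_isTranscendenceBasis ℚ ℂ
  have hcard : #ℂ = #s :=
    Cardinal.lift_inj.mp (IsAlgClosed.cardinal_eq_cardinal_transcendence_basis_of_aleph0_lt _ hs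
      (le_of_eq Cardinal.mkRat) (by rw [mk_complex]; exact aleph0_lt_continuum))
  have hs_ne : s.Nonempty := by
    rcases s.eq_empty_or_nonempty with rfl | h
    · exfalso
      have h0 : (𝔠 : Cardinal) = 0 := by rw [← mk_complex, hcard]; simp
      exact continuum_ne_zero h0
    · exact h
  obtain ⟨x₀, hx₀⟩ := hs_ne
  set S : Set ℂ := s \ {x₀} with hS
  have hSsub : S ⊆ s := Set.diff_subset
  have hSi : AlgebraicIndependent ℚ ((↑) : S → ℂ) := hs.1.mono hSsub
  -- the key transcendence fact
  have hg : Function.Injective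
      (fun o : Option S => (Option.elim o ⟨x₀, hx₀⟩ (fun x => ⟨x.1, x.2.1⟩) : s)) := by
    rintro (_ | a) (_ | b) h
    · rfl
    · exfalso
      have hv : ((⟨x₀, hx₀⟩ : s) : ℂ) = ((⟨b.1, b.2.1⟩ : s) : ℂ) := congrArg Subtype.val h
      exact b.2.2 (by simpa using hv.symm)
    · exfalso
      have hv : ((⟨a.1, a.2.1⟩ : s) : ℂ) = ((⟨x₀, hx₀⟩ : s) : ℂ) := congrArg Subtype.val h
      exact a.2.2 (by simpa using hv)
    · have hv : ((⟨a.1, a.2.1⟩ : s) : ℂ) = ((⟨b.1, b.2.1⟩ : s) : ℂ) := congrArg Subtype.val h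
      exact congrArg some (Subtype.ext hv)
  have hopt : AlgebraicIndependent ℚ (fun o : Option S => o.elim x₀ ((↑) : S → ℂ)) := by
    have := hs.1.comp _ hg
    convert this using 1
    funext o; cases o <;> rfl
  have htr : Transcendental (Algebra.adjoin ℚ S) x₀ := by
    have h := (hSi.option_iff_transcendental x₀).1 hopt
    rwa [Subtype.range_coe] at h
  set A : Subalgebra ℚ ℂ := Algebra.adjoin ℚ S with hA
  set F : IntermediateField ℚ ℂ := IntermediateField.adjoin ℚ S with hF
  have hmem : ∀ {x : ℂ}, x ∈ A → x ∈ F := by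
    intro x hx
    have hle : A ≤ F.toSubalgebra :=
      Algebra.adjoin_le (fun y hy => IntermediateField.subset_adjoin ℚ S hy)
    exact (IntermediateField.mem_toSubalgebra F x).mp (hle hx)
  let incl : ↥A →+* ↥F :=
  { toFun := fun a => ⟨a.1, hmem a.2⟩
    map_one' := rfl
    map_mul' := fun _ _ => rfl
    map_zero' := rfl
    map_add' := fun _ _ => rfl }
  letI : Algebra ↥A ↥F := incl.toAlgebra
  haveI : IsScalarTower ↥A ↥F ℂ := IsScalarTower.of_algebraMap_eq fun a => rfl
  have hinclinj : Function.Injective incl := by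
    intro a b h
    have hv : (incl a).1 = (incl b).1 := congrArg Subtype.val h
    exact Subtype.ext hv
  haveI : IsFractionRing ↥A ↥F :=
  { map_units := by
      rintro ⟨y, hy⟩
      have hy0 : y ≠ 0 := nonZeroDivisors.ne_zero hy
      have : (algebraMap ↥A ↥F) y ≠ 0 := by
        intro h0
        exact hy0 (hinclinj (h0.trans (map_zero incl).symm))
      exact isUnit_iff_ne_zero.mpr this
    surj := by
      rintro ⟨z, hz⟩
      rw [hF, IntermediateField.mem_adjoin_iff] at hz
      obtain ⟨r, q, hrq⟩ := hz
      have hadj : Algebra.adjoin ℚ S = (MvPolynomial.aeval (Subtype.val : S → ℂ)).range := by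
        rw [← Algebra.adjoin_range_eq_range_aeval, Subtype.range_coe]
      have hrA : MvPolynomial.aeval (Subtype.val : S → ℂ) r ∈ A := by
        rw [hA, hadj]; exact ⟨r, rfl⟩
      have hqA : MvPolynomial.aeval (Subtype.val : S → ℂ) q ∈ A := by
        rw [hA, hadj]; exact ⟨q, rfl⟩
      by_cases hq0 : MvPolynomial.aeval (Subtype.val : S → ℂ) q = 0
      · refine ⟨⟨0, 1⟩, ?_⟩
        apply Subtype.ext
        show z * 1 = (0 : ℂ)
        rw [hrq, hq0, div_zero, zero_mul]
      · refine ⟨⟨⟨_, hrA⟩, ⟨⟨_, hqA⟩, mem_nonZeroDivisors_of_ne_zero ?_⟩⟩, ?_⟩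
        · intro h0
          exact hq0 (congrArg Subtype.val h0)
        · apply Subtype.ext
          show z * MvPolynomial.aeval (Subtype.val : S → ℂ) q
            = MvPolynomial.aeval (Subtype.val : S → ℂ) r
          rw [hrq, div_mul_cancel₀ _ hq0]
    exists_of_eq := by
      intro x y h
      exact ⟨1, by rw [hinclinj h]⟩ }
  have htrF : Transcendental ↥F x₀ := by
    intro h
    exact htr ((IsFractionRing.isAlgebraic_iff ↥A ↥F ℂ).mpr h)
  -- the subfield
  set K₀ : IntermediateField ↥F ℂ := algebraicClosure ↥F ℂ with hK₀
  haveI hac : IsAlgClosed ↥K₀ := (algebraicClosure.isAlgClosure ↥F ℂ).isAlgClosed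
  haveI : CharZero ↥K₀ := RingHom.charZero (algebraMap ↥K₀ ℂ)
  -- cardinality
  have hK₀le : #↥K₀ ≤ 𝔠 := by
    rw [← mk_complex]
    exact Cardinal.mk_le_of_injective (Subtype.val_injective : Function.Injective ((↑) : ↥K₀ → ℂ))
  have hSge : 𝔠 ≤ #↥S := by
    have h1 : #↥s ≤ #↥S + 1 := by
      have := Cardinal.le_mk_diff_add_mk s {x₀}
      rwa [Cardinal.mk_singleton] at this
    have h2 : 𝔠 ≤ #↥S + 1 := by
      calc 𝔠 = #ℂ := mk_complex.symm
        _ = #↥s := hcard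
        _ ≤ #↥S + 1 := h1
    rcases le_or_gt ℵ₀ #↥S with h | h
    · rwa [Cardinal.add_one_eq h] at h2
    · exfalso
      have hlt1 : #↥S + 1 < ℵ₀ := Cardinal.add_lt_aleph0 h Cardinal.one_lt_aleph0
      exact absurd (h2.trans_lt hlt1) (not_lt.mpr aleph0_lt_continuum.le)
  have hK₀ge : 𝔠 ≤ #↥K₀ := by
    refine hSge.trans (Cardinal.mk_le_of_injective (f := fun x : S =>
      (⟨x.1, ?_⟩ : ↥K₀)) ?_)
    · exact mem_algebraicClosure_iff.2 (isAlgebraic_algebraMap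
        (⟨x.1, hmem (Algebra.subset_adjoin x.2)⟩ : ↥F))
    · intro x y h
      have hv := congrArg (Subtype.val : ↥K₀ → ℂ) h
      exact Subtype.ext hv
  have hlt : ℵ₀ < #↥K₀ := aleph0_lt_continuum.trans_le hK₀ge
  have hceq : #↥K₀ = #ℂ := by
    rw [mk_complex]
    exact le_antisymm hK₀le hK₀ge
  obtain ⟨e⟩ := IsAlgClosed.ringEquiv_of_equiv_of_charZero (K := ↥K₀) (L := ℂ) hlt (Cardinal.eq.1 hceq)
  refine ⟨K₀.toSubfield, ?_, ?_⟩
  · intro htop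
    apply htrF
    have hx₀mem : x₀ ∈ K₀.toSubfield := htop ▸ Subfield.mem_top x₀
    exact mem_algebraicClosure_iff.1 hx₀mem
  · let j : ↥(K₀.toSubfield) ≃+* ↥K₀ :=
    { toFun := fun x => ⟨x.1, x.2⟩
      invFun := fun x => ⟨x.1, x.2⟩
      left_inv := fun _ => rfl
      right_inv := fun _ => rfl
      map_mul' := fun _ _ => rfl
      map_add' := fun _ _ => rfl }
    exact ⟨j.trans e⟩
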